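/- Let |A| > 1, ρ a right congruence on A^k, and I an ideal of A* containing A^k. Then ρ ⊆ τ_I if and only if Λ_ρ ⊆ I (equivalently Λ'_ρ ⊆ I), and τ_I ⊆ ρ if and only if I ⊆ Res(ρ). -/
import Mathlib


/-- Words of length `k` over `A`. -/
abbrev Word (A : Type*) (k : ℕ) := {w : List A // w.length = k}

/-- The shift action of a letter: `u.a` is the suffix of length `k` of `u a`. -/
def act {A : Type*} (k : ℕ) (a : A) (u : Word A k) : Word A k :=
  ⟨(u.val ++ [a]).drop ((u.val ++ [a]).length - k), by
    have h := u.2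
    simp only [List.length_drop, List.length_append, List.length_cons,
      List.length_nil, h]
    omega⟩

/-- A right congruence on `A^k`. -/
def IsRC {A : Type*} (k : ℕ) (r : Word A k → Word A k → Prop) : Prop :=
  Equivalence r ∧ ∀ u v : Word A k, r u v → ∀ a : A, r (act k a u) (act k a v)

/-- The relation `τ_I` on `A^k`: a common suffix in `I`. -/
def tauW {A : Type*} (k : ℕ) (I : Set (List A)) (u v : Word A k) : Prop :=
  ∃ w ∈ I, w <:+ u.val ∧ w <:+ v.val

/-- `w` is the longest common suffix of `u` and `v`. -/
def IsLcs {A : Type*} (u v w : List A) : Prop :=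
  w <:+ u ∧ w <:+ v ∧ ∀ w' : List A, w' <:+ u → w' <:+ v → w' <:+ w

/-- `w` is the longest common suffix of the `ρ`-class of `u`. -/
def IsLcsClass {A : Type*} {k : ℕ} (ρ : Word A k → Word A k → Prop)
    (u : Word A k) (w : List A) : Prop :=
  (∀ v : Word A k, ρ u v → w <:+ v.val) ∧
    ∀ w' : List A, (∀ v : Word A k, ρ u v → w' <:+ v.val) → w' <:+ w

/-- `Λ_ρ = { lcs(C) : C ∈ A^k/ρ }`. -/
def Lam {A : Type*} {k : ℕ} (ρ : Word A k → Word A k → Prop) : Set (List A) :=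
  {w | ∃ u : Word A k, IsLcsClass ρ u w}

/-- `Λ'_ρ = { lcs(u,v) : (u,v) ∈ ρ }`. -/
def Lam' {A : Type*} {k : ℕ} (ρ : Word A k → Word A k → Prop) : Set (List A) :=
  {w | ∃ u v : Word A k, ρ u v ∧ IsLcs u.val v.val w}

/-- `Res(ρ)`: words `w` such that all `u, v ∈ A^k` having suffix `w` are
`ρ`-equivalent. -/
def ResSuf {A : Type*} (k : ℕ) (ρ : Word A k → Word A k → Prop) : Set (List A) :=
  {w | ∀ u v : Word A k, w <:+ u.val → w <:+ v.val → ρ u v}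

section LcsAux

variable {A : Type*} [DecidableEq A]

/-- Longest common prefix. -/
def lcp : List A → List A → List A
  | a :: u, b :: v => if a = b then a :: lcp u v else []
  | _, _ => []

theorem lcp_prefix_left : ∀ u v : List A, lcp u v <+: u
  | a :: u, b :: v => by
    simp only [lcp]
    split
    · exact List.cons_prefix_cons.mpr ⟨rfl, lcp_prefix_left u v⟩
    · exact List.nil_prefix
  | [], v => by simp [lcp]
  | a :: u, [] => by simp [lcp]

theorem lcp_prefix_right : ∀ u v : List A, lcp u v <+: v
  | a :: u, b :: v => by
    simp only [lcp]
    split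
    · rename_i h
      subst h
      exact List.cons_prefix_cons.mpr ⟨rfl, lcp_prefix_right u v⟩
    · exact List.nil_prefix
  | [], v => by simp [lcp]
  | a :: u, [] => by simp [lcp]

theorem prefix_lcp : ∀ (w u v : List A), w <+: u → w <+: v → w <+: lcp u v
  | [], _, _, _, _ => List.nil_prefix
  | c :: w, u, v, hu, hv => by
    obtain ⟨u', rfl⟩ := hu
    obtain ⟨v', rfl⟩ := hv
    simp only [List.cons_append, lcp, if_pos rfl]
    exact List.cons_prefix_cons.mpr
      ⟨rfl, prefix_lcp w _ _ ⟨u', rfl⟩ ⟨v', rfl⟩⟩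

/-- Longest common suffix. -/
def lcsFn (u v : List A) : List A := (lcp u.reverse v.reverse).reverse

theorem isLcs_lcsFn (u v : List A) : IsLcs u v (lcsFn u v) := by
  refine ⟨?_, ?_, ?_⟩
  · rw [← List.reverse_prefix, lcsFn, List.reverse_reverse]
    exact lcp_prefix_left _ _
  · rw [← List.reverse_prefix, lcsFn, List.reverse_reverse]
    exact lcp_prefix_right _ _
  · intro w' h1 h2
    rw [← List.reverse_prefix] at h1 h2 ⊢
    rw [lcsFn, List.reverse_reverse]
    exact prefix_lcp _ _ _ h1 h2

omit [DecidableEq A] in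
theorem suffix_of_suffix_length_le {w₁ w₂ u : List A}
    (h1 : w₁ <:+ u) (h2 : w₂ <:+ u) (h : w₁.length ≤ w₂.length) : w₁ <:+ w₂ := by
  rw [← List.reverse_prefix] at h1 h2 ⊢
  exact List.prefix_of_prefix_length_le h1 h2 (by simpa using h)

end LcsAux

/-- for `|A| > 1`, a right congruence `ρ` on `A^k` and an ideal
`I ⊇ A^k` of `A*`: `ρ ⊆ τ_I ↔ Λ_ρ ⊆ I ↔ Λ'_ρ ⊆ I`, and `τ_I ⊆ ρ ↔ I ⊆ Res(ρ)`. -/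

theorem rc_vs_tau_inclusions {A : Type*} [Fintype A] (hA : 1 < Fintype.card A)
    (k : ℕ) (hk : 1 ≤ k) (ρ : Word A k → Word A k → Prop) (hρ : IsRC k ρ)
    (I : Set (List A))
    (hI : ∀ u v w : List A, w ∈ I → u ++ w ++ v ∈ I)
    (hIk : ∀ w : List A, w.length = k → w ∈ I) :
    ((∀ u v : Word A k, ρ u v → tauW k I u v) ↔ Lam ρ ⊆ I) ∧
    ((∀ u v : Word A k, ρ u v → tauW k I u v) ↔ Lam' ρ ⊆ I) ∧
    ((∀ u v : Word A k, tauW k I u v → ρ u v) ↔ I ⊆ ResSuf k ρ) := by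
  classical
  obtain ⟨⟨hrefl, hsymm, htrans⟩, -⟩ := hρ
  -- For each `u` there is `v₀` in its class such that `lcs(u, v₀)` is the
  -- longest common suffix of the whole class of `u`.
  have key : ∀ u : Word A k, ∃ v₀ : Word A k, ρ u v₀ ∧
      IsLcsClass ρ u (lcsFn u.val v₀.val) := by
    intro u
    set S : Set ℕ := {n | ∃ v : Word A k, ρ u v ∧ (lcsFn u.val v.val).length = n}
      with hSdef
    have hS : S.Nonempty := ⟨_, u, hrefl u, rfl⟩
    obtain ⟨v₀, hv₀, hlen⟩ := Nat.sInf_mem hS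
    have hmem : ∀ v : Word A k, ρ u v → lcsFn u.val v₀.val <:+ v.val := by
      intro v hv
      have hle : (lcsFn u.val v₀.val).length ≤ (lcsFn u.val v.val).length := by
        rw [hlen]
        exact Nat.sInf_le ⟨v, hv, rfl⟩
      exact (suffix_of_suffix_length_le (isLcs_lcsFn u.val v₀.val).1
        (isLcs_lcsFn u.val v.val).1 hle).trans (isLcs_lcsFn u.val v.val).2.1
    exact ⟨v₀, hv₀, hmem, fun w' hw' =>
      (isLcs_lcsFn u.val v₀.val).2.2 w' (hw' u (hrefl u)) (hw' v₀ hv₀)⟩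
  -- `Λ_ρ ⊆ Λ'_ρ`.
  have hLL' : Lam ρ ⊆ Lam' ρ := by
    rintro w ⟨u, hw⟩
    obtain ⟨v₀, hv₀, hcls⟩ := key u
    have h1 : w <:+ lcsFn u.val v₀.val :=
      (isLcs_lcsFn u.val v₀.val).2.2 w (hw.1 u (hrefl u)) (hw.1 v₀ hv₀)
    have h2 : lcsFn u.val v₀.val <:+ w := hw.2 _ hcls.1
    have hwe : w = lcsFn u.val v₀.val := h1.sublist.antisymm h2.sublist
    exact ⟨u, v₀, hv₀, hwe ▸ isLcs_lcsFn u.val v₀.val⟩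
  -- `ρ ⊆ τ_I ↔ Λ'_ρ ⊆ I`.
  have main' : (∀ u v : Word A k, ρ u v → tauW k I u v) ↔ Lam' ρ ⊆ I := by
    constructor
    · rintro h w ⟨u, v, huv, hlcs⟩
      obtain ⟨w', hw'I, hsu, hsv⟩ := h u v huv
      obtain ⟨p, rfl⟩ := hlcs.2.2 w' hsu hsv
      simpa using hI p [] w' hw'I
    · intro h u v huv
      exact ⟨lcsFn u.val v.val, h ⟨u, v, huv, isLcs_lcsFn _ _⟩,
        (isLcs_lcsFn _ _).1, (isLcs_lcsFn _ _).2.1⟩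
  refine ⟨?_, main', ?_, ?_⟩
  · constructor
    · intro h w hw
      exact main'.mp h (hLL' hw)
    · intro h u v huv
      obtain ⟨v₀, hv₀, hcls⟩ := key u
      exact ⟨lcsFn u.val v₀.val, h ⟨u, hcls⟩, hcls.1 u (hrefl u), hcls.1 v huv⟩
  · intro h w hwI u v hsu hsv
    exact h u v ⟨w, hwI, hsu, hsv⟩
  · rintro h u v ⟨w, hwI, hsu, hsv⟩
    exact h hwI u v hsu hsv
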